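/- With sin_q(z) = sum_{n≥0} (-1)^n q^(n^2) z^(2n+1)/[2n+1]_q! and cos_q(z) = sum_{n≥0} (-1)^n q^(n^2) z^(2n)/[2n]_q! over Q(q), for n ≥ 1 the coefficient of z^(2n) in cos_q(z)·cos_{1/q}(z) equals (-1)^n q^(n(n-1)/2)/[2n]_q! · (prod_{i=1}^{n-1}(1+q^i)^2) · (1+q^n), and this equals the negative of the coefficient of z^(2n) in sin_q(z)·sin_{1/q}(z). -/

import Mathlib

noncomputable section
open Finset PowerSeries

abbrev Fq : Type := RatFunc ℚ

/-- The variable `q` as element of the field of rational functions `ℚ(q)`. -/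
def qv : Fq := RatFunc.X

/-- The q-integer `[m]_q = 1 + q + ... + q^(m-1)`. -/
def qInt (x : Fq) (m : ℕ) : Fq := ∑ i ∈ Finset.range m, x ^ i

/-- The q-factorial `[m]_q! = [1]_q [2]_q ⋯ [m]_q`. -/
def qFact (x : Fq) (m : ℕ) : Fq := ∏ i ∈ Finset.range m, qInt x (i + 1)

/-- `sin_q(z) = ∑ (-1)^n q^(n^2) z^(2n+1)/[2n+1]_q!`. -/
def qsin (x : Fq) : PowerSeries Fq :=
  PowerSeries.mk fun m =>
    if m % 2 = 1 then (-1 : Fq) ^ (m / 2) * x ^ ((m / 2) ^ 2) / qFact x m else 0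

/-- `cos_q(z) = ∑ (-1)^n q^(n^2) z^(2n)/[2n]_q!`. -/
def qcos (x : Fq) : PowerSeries Fq :=
  PowerSeries.mk fun m =>
    if m % 2 = 0 then (-1 : Fq) ^ (m / 2) * x ^ ((m / 2) ^ 2) / qFact x m else 0

lemma qv_ne_zero : qv ≠ 0 := RatFunc.X_ne_zero

lemma qv_pow_ne_one {m : ℕ} (hm : 1 ≤ m) : qv ^ m ≠ 1 := by
  intro h
  have h2 : (algebraMap (Polynomial ℚ) (RatFunc ℚ)) (Polynomial.X ^ m) =
      (algebraMap (Polynomial ℚ) (RatFunc ℚ)) 1 := by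
    rw [map_pow, map_one, ← RatFunc.X]; exact h
  have h3 := RatFunc.algebraMap_injective ℚ h2
  have h4 : (Polynomial.X ^ m : Polynomial ℚ).coeff 0 = (1 : Polynomial ℚ).coeff 0 := by rw [h3]
  simp [Polynomial.coeff_X_pow] at h4
  omega

lemma qInt_ne_zero {m : ℕ} (hm : 1 ≤ m) : qInt qv m ≠ 0 := by
  intro h
  have h2 : qInt qv m * (qv - 1) = qv ^ m - 1 := geom_sum_mul qv m
  rw [h, zero_mul] at h2
  have : qv ^ m = 1 := by linear_combination -h2
  exact qv_pow_ne_one hm this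

lemma qFact_ne_zero (m : ℕ) : qFact qv m ≠ 0 := by
  apply Finset.prod_ne_zero_iff.mpr
  intro i _
  exact qInt_ne_zero (Nat.le_add_left 1 i)

lemma qFact_succ (x : Fq) (m : ℕ) : qFact x (m + 1) = qFact x m * qInt x (m + 1) :=
  Finset.prod_range_succ _ _

lemma qInt_add (x : Fq) (a b : ℕ) : qInt x (a + b) = qInt x a + x ^ a * qInt x b := by
  rw [qInt, Finset.sum_range_add, qInt, qInt, Finset.mul_sum]
  simp [pow_add]

lemma qInt_inv (m : ℕ) : qv ^ m * qInt qv⁻¹ (m + 1) = qInt qv (m + 1) := by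
  rw [qInt, qInt, Finset.mul_sum]
  rw [← Finset.sum_range_reflect (fun i => qv ^ i) (m + 1)]
  apply Finset.sum_congr rfl
  intro i hi
  rw [Finset.mem_range] at hi
  rw [inv_pow]
  have h1 : m + 1 - 1 - i = m - i := by omega
  rw [h1]
  exact (pow_sub₀ qv qv_ne_zero (by omega : i ≤ m)).symm

lemma qFact_inv (m : ℕ) : qFact qv⁻¹ m = (qv ^ m.choose 2)⁻¹ * qFact qv m := by
  induction m with
  | zero => simp [qFact]
  | succ m ih =>
    rw [qFact_succ, qFact_succ, ih]
    have h1 : qInt qv⁻¹ (m + 1) = (qv ^ m)⁻¹ * qInt qv (m + 1) := by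
      rw [← qInt_inv m, inv_mul_cancel_left₀ (pow_ne_zero _ qv_ne_zero)]
    rw [h1]
    have hc : (m + 1).choose 2 = m.choose 2 + m := by
      rw [Nat.choose_succ_succ]
      simp [Nat.choose_one_right]
      omega
    rw [hc, pow_add, mul_inv]
    ring

def qb : ℕ → ℕ → Fq
  | 0, 0 => 1
  | 0, _ + 1 => 0
  | N + 1, 0 => qb N 0
  | N + 1, m + 1 => qb N (m + 1) + qv ^ (N - m) * qb N m

lemma qb_zero (N : ℕ) : qb N 0 = 1 := by
  induction N with
  | zero => rfl
  | succ N ih => rw [qb, ih]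

lemma qb_eq_zero {N m : ℕ} (h : N < m) : qb N m = 0 := by
  induction N generalizing m with
  | zero => obtain ⟨m, rfl⟩ := Nat.exists_eq_add_of_lt h; simp [qb]
  | succ N ih =>
    obtain ⟨m', rfl⟩ : ∃ m', m = m' + 1 := ⟨m - 1, by omega⟩
    rw [qb, ih (by omega), ih (by omega), mul_zero, add_zero]

lemma qFact_zero (x : Fq) : qFact x 0 = 1 := rfl

lemma qb_fact : ∀ N m, m ≤ N → qb N m * (qFact qv m * qFact qv (N - m)) = qFact qv N := by
  intro N
  induction N with
  | zero => intro m hm; interval_cases m; simp [qb, qFact]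
  | succ N ih =>
    intro m hm
    match m with
    | 0 => simp [qb_zero, qFact_zero, qFact]
    | m + 1 =>
      rw [qb]
      rcases Nat.lt_or_ge m N with h | h
      · have hmN : m + 1 ≤ N := by omega
        have ih1 := ih (m + 1) hmN
        have ih2 := ih m (by omega)
        have e2 : N - m = (N - (m + 1)) + 1 := by omega
        have e3 : N - (m + 1) + 1 = N - m := by omega
        rw [e2, qFact_succ, e3] at ih2
        rw [qFact_succ] at ih1
        have hsplit : qInt qv (N + 1) = qInt qv (N - m) + qv ^ (N - m) * qInt qv (m + 1) := by
          have h5 := qInt_add qv (N - m) (m + 1)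
          rw [show N - m + (m + 1) = N + 1 by omega] at h5
          exact h5
        rw [show N + 1 - (m + 1) = (N - (m + 1)) + 1 by omega, qFact_succ qv (N - (m + 1)),
          qFact_succ qv m, qFact_succ qv N, e3]
        linear_combination qInt qv (N - m) * ih1 + qv ^ (N - m) * qInt qv (m + 1) * ih2 -
          qFact qv N * hsplit
      · have hm' : m = N := by omega
        rw [hm']
        have hN : qb N N = 1 := by
          have h1 := ih N le_rfl
          rw [Nat.sub_self, qFact_zero, mul_one] at h1
          exact mul_right_cancel₀ (qFact_ne_zero N) (h1.trans (one_mul (qFact qv N)).symm)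
        rw [qb_eq_zero (by omega : N < N + 1), hN, Nat.sub_self, pow_zero]
        simp only [Nat.add_sub_cancel, Nat.sub_self, qFact_zero]
        ring

lemma qb_symm {N m : ℕ} (h : m ≤ N) : qb N m = qb N (N - m) := by
  have h1 := qb_fact N m h
  have h2 := qb_fact N (N - m) (by omega)
  rw [show N - (N - m) = m by omega] at h2
  have hm := qFact_ne_zero m
  have hj := qFact_ne_zero (N - m)
  field_simp at h1 h2
  rw [← h2] at h1
  exact mul_right_cancel₀ (mul_ne_zero hm hj) (by linear_combination h1)

lemma qb_theorem (N : ℕ) (x : Fq) :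
    ∏ i ∈ Finset.range N, (1 + qv ^ i * x) =
      ∑ m ∈ Finset.range (N + 1), qb N m * qv ^ m.choose 2 * x ^ m := by
  induction N with
  | zero => simp [qb]
  | succ N ih =>
    rw [Finset.prod_range_succ, ih, Finset.sum_range_succ' _ (N + 1)]
    have key : ∀ m ∈ Finset.range (N + 1),
        qb (N + 1) (m + 1) * qv ^ (m + 1).choose 2 * x ^ (m + 1) =
        qb N (m + 1) * qv ^ (m + 1).choose 2 * x ^ (m + 1) +
          (qb N m * qv ^ m.choose 2 * x ^ m) * (qv ^ N * x) := by
      intro m hm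
      rw [Finset.mem_range] at hm
      rw [qb]
      have hc : (m + 1).choose 2 = m.choose 2 + m := by
        rw [Nat.choose_succ_succ]
        simp [Nat.choose_one_right]
        omega
      rw [hc, pow_add]
      have hp : qv ^ (N - m) * qv ^ m = qv ^ N := by
        rw [← pow_add]; congr 1; omega
      linear_combination qb N m * qv ^ m.choose 2 * x ^ m * x * hp
    rw [Finset.sum_congr rfl key, Finset.sum_add_distrib]
    have t0 : qb (N + 1) 0 * qv ^ (Nat.choose 0 2) * x ^ 0 = qb N 0 * qv ^ (Nat.choose 0 2) * x ^ 0 := by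
      rw [qb]
    rw [t0, ← Finset.sum_mul]
    have hlast : qb N (N + 1) * qv ^ (N + 1).choose 2 * x ^ (N + 1) = 0 := by
      rw [qb_eq_zero (by omega)]; ring
    have h6 : (∑ m ∈ Finset.range (N + 1), qb N (m + 1) * qv ^ (m + 1).choose 2 * x ^ (m + 1)) +
        qb N 0 * qv ^ (Nat.choose 0 2) * x ^ 0 =
        ∑ m ∈ Finset.range (N + 1), qb N m * qv ^ m.choose 2 * x ^ m := by
      rw [← Finset.sum_range_succ' (fun m => qb N m * qv ^ m.choose 2 * x ^ m) (N + 1),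
        Finset.sum_range_succ, hlast, add_zero]
    linear_combination -h6

lemma Icc_prod (m : ℕ) (f : ℕ → Fq) : ∏ i ∈ Finset.Icc 1 m, f i = ∏ i ∈ Finset.range m, f (i + 1) := by
  induction m with
  | zero => simp
  | succ m ih =>
    rw [Finset.prod_range_succ, ← ih, ← Finset.prod_Icc_succ_top (by omega : 1 ≤ m + 1)]

lemma ch2e (k : ℕ) : (2 * k).choose 2 + k = 2 * (k * k) := by
  rw [Nat.choose_two_right]
  rcases k with _ | k
  · simp
  · rw [show 2 * (k + 1) - 1 = 2 * k + 1 by omega,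
      show 2 * (k + 1) * (2 * k + 1) = 2 * ((k + 1) * (2 * k + 1)) by ring,
      Nat.mul_div_cancel_left _ (by norm_num)]
    ring

lemma ch2o (k : ℕ) : (2 * k + 1).choose 2 = 2 * (k * k) + k := by
  rw [Nat.choose_two_right]
  rw [show 2 * k + 1 - 1 = 2 * k by omega,
    show (2 * k + 1) * (2 * k) = 2 * (k * (2 * k + 1)) by ring,
    Nat.mul_div_cancel_left _ (by norm_num)]
  ring

lemma sum_split (N : ℕ) (f : ℕ → Fq) :
    ∑ m ∈ Finset.range (2 * N + 1), f m =
      ∑ k ∈ Finset.range (N + 1), f (2 * k) + ∑ k ∈ Finset.range N, f (2 * k + 1) := by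
  induction N with
  | zero => simp
  | succ N ih =>
    rw [show 2 * (N + 1) + 1 = (2 * N + 1) + 1 + 1 by ring, Finset.sum_range_succ,
      Finset.sum_range_succ, ih, Finset.sum_range_succ _ (N + 1), Finset.sum_range_succ _ N]
    rw [show 2 * N + 1 + 1 = 2 * (N + 1) by ring, Finset.sum_range_succ (fun k => f (2 * k + 1)) N]
    ring

lemma qpow_eq {a b c d : ℕ} (h : a + d = c + b) : qv ^ a * (qv ^ b)⁻¹ = qv ^ c * (qv ^ d)⁻¹ := by
  have h1 : qv ^ b ≠ 0 := pow_ne_zero _ qv_ne_zero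
  have h2 : qv ^ d ≠ 0 := pow_ne_zero _ qv_ne_zero
  field_simp
  rw [← pow_add, ← pow_add, h]
  ring

lemma prod_neg (p : ℕ) :
    ∏ i ∈ Finset.range (2 * (p + 1)), (1 + qv ^ i * (-(qv ^ p)⁻¹)) = 0 := by
  apply Finset.prod_eq_zero (Finset.mem_range.mpr (by omega : p < 2 * (p + 1)))
  rw [mul_neg, mul_inv_cancel₀ (pow_ne_zero _ qv_ne_zero)]
  ring

lemma prod_pos (p t : ℕ) (ht : 2 * t = (p + 1) * p) :
    ∏ i ∈ Finset.range (2 * (p + 1)), (1 + qv ^ i * (qv ^ p)⁻¹) =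
      2 * (qv ^ t)⁻¹ * (∏ i ∈ Finset.Icc 1 p, (1 + qv ^ i) ^ 2) * (1 + qv ^ (p + 1)) := by
  have hq := qv_ne_zero
  have step1 : ∀ i ∈ Finset.range (2 * (p + 1)),
      (1 + qv ^ i * (qv ^ p)⁻¹) = (qv ^ p)⁻¹ * (qv ^ p + qv ^ i) := by
    intro i _
    field_simp
  rw [Finset.prod_congr rfl step1, Finset.prod_mul_distrib, Finset.prod_const, Finset.card_range]
  have hsplit : (2 * (p + 1)) = p + (1 + (p + 1)) := by omega
  rw [hsplit, Finset.prod_range_add, Finset.prod_range_add]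
  have hrefl : ∏ j ∈ Finset.range p, (1 + qv ^ (p - j)) = ∏ j ∈ Finset.range p, (1 + qv ^ (j + 1)) := by
    rw [← Finset.prod_range_reflect (fun j => 1 + qv ^ (j + 1)) p]
    apply Finset.prod_congr rfl
    intro j hj
    rw [Finset.mem_range] at hj
    have e1 : p - 1 - j + 1 = p - j := by omega
    rw [e1]
  have first : ∏ i ∈ Finset.range p, (qv ^ p + qv ^ i) =
      qv ^ (∑ i ∈ Finset.range p, i) * ∏ i ∈ Finset.range p, (1 + qv ^ (i + 1)) := by
    rw [← hrefl, ← Finset.prod_pow_eq_pow_sum, ← Finset.prod_mul_distrib]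
    apply Finset.prod_congr rfl
    intro i hi
    rw [Finset.mem_range] at hi
    rw [mul_add, mul_one, ← pow_add, show i + (p - i) = p by omega]
    ring
  have second : ∏ i ∈ Finset.range 1, (qv ^ p + qv ^ (p + i)) = 2 * qv ^ p := by
    simp
    ring
  have third : ∏ i ∈ Finset.range (p + 1), (qv ^ p + qv ^ (p + (1 + i))) =
      qv ^ (p * (p + 1)) * ((∏ i ∈ Finset.range p, (1 + qv ^ (i + 1))) * (1 + qv ^ (p + 1))) := by
    rw [← Finset.prod_range_succ (fun i => 1 + qv ^ (i + 1)) p]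
    have h7 : ∀ i ∈ Finset.range (p + 1),
        (qv ^ p + qv ^ (p + (1 + i))) = qv ^ p * (1 + qv ^ (i + 1)) := by
      intro i _
      rw [mul_add, mul_one, ← pow_add, show p + (i + 1) = p + (1 + i) by omega]
    rw [Finset.prod_congr rfl h7, Finset.prod_mul_distrib, Finset.prod_const, Finset.card_range,
      ← pow_mul]
  rw [first, second, third, Icc_prod p (fun i => (1 + qv ^ i) ^ 2)]
  have hu : (∑ i ∈ Finset.range p, i) * 2 = p * (p - 1) := Finset.sum_range_id_mul_two p
  set u := ∑ i ∈ Finset.range p, i with hudef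
  set A := ∏ i ∈ Finset.range p, (1 + qv ^ (i + 1)) with hA
  have hpow : ((qv ^ p) ^ (p + (1 + (p + 1))))⁻¹ * (qv ^ u * (2 * qv ^ p) * (qv ^ (p * (p + 1)))) =
      2 * (qv ^ t)⁻¹ := by
    rw [← pow_mul]
    have hcomb : qv ^ u * (2 * qv ^ p) * qv ^ (p * (p + 1)) = 2 * qv ^ (u + p + p * (p + 1)) := by
      rw [pow_add, pow_add]
      ring
    rw [hcomb]
    have harith : u + p + p * (p + 1) + t = 0 + p * (p + (1 + (p + 1))) := by
      have e1 : p * (p - 1) + 2 * p = (p + 1) * p := by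
        rcases p with _ | p'
        · simp
        · simp only [Nat.add_sub_cancel]; ring
      generalize hA1 : p * (p - 1) = a at *
      generalize hA2 : (p + 1) * p = b at *
      generalize hA3 : p * (p + 1) = c at *
      have e2 : b = c := by rw [← hA2, ← hA3]; ring
      generalize hA4 : p * (p + (1 + (p + 1))) = d at *
      have e3 : d = c + b := by rw [← hA4, ← hA3, ← hA2]; ring
      omega
    have h8 := qpow_eq harith
    rw [pow_zero, one_mul] at h8
    linear_combination 2 * h8
  calc ((qv ^ p)⁻¹) ^ (p + (1 + (p + 1))) *
        (qv ^ u * A * (2 * qv ^ p * (qv ^ (p * (p + 1)) * (A * (1 + qv ^ (p + 1))))))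
      = (((qv ^ p) ^ (p + (1 + (p + 1))))⁻¹ * (qv ^ u * (2 * qv ^ p) * (qv ^ (p * (p + 1))))) *
          (A * A * (1 + qv ^ (p + 1))) := by rw [inv_pow]; ring
    _ = 2 * (qv ^ t)⁻¹ * (A * A * (1 + qv ^ (p + 1))) := by rw [hpow]
    _ = 2 * (qv ^ t)⁻¹ * (∏ i ∈ Finset.range p, (1 + qv ^ (i + 1)) ^ 2) * (1 + qv ^ (p + 1)) := by
        rw [hA, ← Finset.prod_mul_distrib]
        have h9 : ∀ i ∈ Finset.range p, (1 + qv ^ (i+1)) * (1 + qv ^ (i+1)) = (1 + qv ^ (i+1)) ^ 2 := by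
          intro i _
          ring
        rw [Finset.prod_congr rfl h9]
        ring

lemma coeff_qcos_even (x : Fq) (k : ℕ) :
    PowerSeries.coeff (R := Fq) (2 * k) (qcos x) = (-1 : Fq) ^ k * x ^ (k ^ 2) / qFact x (2 * k) := by
  rw [qcos, PowerSeries.coeff_mk]
  simp [Nat.mul_mod_right, Nat.mul_div_cancel_left _ (by norm_num : 0 < 2)]

lemma coeff_qcos_odd (x : Fq) (k : ℕ) :
    PowerSeries.coeff (R := Fq) (2 * k + 1) (qcos x) = 0 := by
  rw [qcos, PowerSeries.coeff_mk]
  simp [Nat.add_mul_mod_self_left]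

lemma coeff_qsin_odd (x : Fq) (k : ℕ) :
    PowerSeries.coeff (R := Fq) (2 * k + 1) (qsin x) = (-1 : Fq) ^ k * x ^ (k ^ 2) / qFact x (2 * k + 1) := by
  rw [qsin, PowerSeries.coeff_mk]
  have h1 : (2 * k + 1) % 2 = 1 := by omega
  have h2 : (2 * k + 1) / 2 = k := by omega
  rw [h1, h2]
  simp

lemma coeff_qsin_even (x : Fq) (k : ℕ) :
    PowerSeries.coeff (R := Fq) (2 * k) (qsin x) = 0 := by
  rw [qsin, PowerSeries.coeff_mk]
  simp [Nat.mul_mod_right]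

lemma exp_cos (k j p : ℕ) (h : p + 1 = k + j) :
    k * k + (2 * j).choose 2 + 2 * p * k = (p + 1) * p + ((2 * k).choose 2 + j * j) := by
  have h' : (p : ℤ) + 1 = k + j := by exact_mod_cast h
  have h1' : (((2 * j).choose 2 : ℕ) : ℤ) + j = 2 * (j * j) := by exact_mod_cast ch2e j
  have h2' : (((2 * k).choose 2 : ℕ) : ℤ) + k = 2 * (k * k) := by exact_mod_cast ch2e k
  zify
  linear_combination h1' - h2' - ((p : ℤ) - k + j) * h'

lemma exp_sin (k j p : ℕ) (h : p = k + j) :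
    k * k + p * (2 * j + 1) = (p + 1) * p + j * j := by
  have h' : (p : ℤ) = k + j := by exact_mod_cast h
  zify
  linear_combination -((p : ℤ) - j + k) * h'

lemma term_cos (p k j : ℕ) (hkj : p + 1 = k + j) :
    (PowerSeries.coeff (R := Fq) (2 * k) (qcos qv)) * (PowerSeries.coeff (R := Fq) (2 * j) (qcos qv⁻¹)) =
      ((-1 : Fq) ^ (p + 1) * qv ^ ((p + 1) * p) / qFact qv (2 * (p + 1))) *
        (qb (2 * (p + 1)) (2 * k) * qv ^ ((2 * k).choose 2) * ((qv ^ p)⁻¹) ^ (2 * k)) := by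
  have ha := qFact_ne_zero (2 * k)
  have hb := qFact_ne_zero (2 * j)
  have hc := qFact_ne_zero (2 * (p + 1))
  have hq := qv_ne_zero
  have hqb := qb_fact (2 * (p + 1)) (2 * k) (by omega)
  rw [show 2 * (p + 1) - 2 * k = 2 * j by omega] at hqb
  have hqb' : qb (2 * (p + 1)) (2 * k) =
      qFact qv (2 * (p + 1)) * ((qFact qv (2 * k))⁻¹ * (qFact qv (2 * j))⁻¹) := by
    field_simp
    linear_combination hqb
  rw [coeff_qcos_even, coeff_qcos_even, qFact_inv (2 * j), inv_pow, hqb']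
  have hsign : (-1 : Fq) ^ (p + 1) = (-1) ^ k * (-1) ^ j := by rw [← pow_add, hkj]
  have hpow := qpow_eq (exp_cos k j p hkj)
  rw [hsign]
  rw [pow_two, pow_two]
  rw [inv_pow, ← pow_mul, show p * (2 * k) = 2 * p * k by ring]
  field_simp at hpow ⊢
  linear_combination hpow

lemma term_sin (p k j : ℕ) (hkj : p = k + j) :
    (PowerSeries.coeff (R := Fq) (2 * k + 1) (qsin qv)) * (PowerSeries.coeff (R := Fq) (2 * j + 1) (qsin qv⁻¹)) =
      -(((-1 : Fq) ^ (p + 1) * qv ^ ((p + 1) * p) / qFact qv (2 * (p + 1))) *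
        (qb (2 * (p + 1)) (2 * j + 1) * qv ^ ((2 * j + 1).choose 2) * ((qv ^ p)⁻¹) ^ (2 * j + 1))) := by
  have ha := qFact_ne_zero (2 * k + 1)
  have hb := qFact_ne_zero (2 * j + 1)
  have hc := qFact_ne_zero (2 * (p + 1))
  have hq := qv_ne_zero
  have hqb := qb_fact (2 * (p + 1)) (2 * j + 1) (by omega)
  rw [show 2 * (p + 1) - (2 * j + 1) = 2 * k + 1 by omega] at hqb
  have hqb' : qb (2 * (p + 1)) (2 * j + 1) =
      qFact qv (2 * (p + 1)) * ((qFact qv (2 * j + 1))⁻¹ * (qFact qv (2 * k + 1))⁻¹) := by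
    field_simp
    linear_combination hqb
  rw [coeff_qsin_odd, coeff_qsin_odd, qFact_inv (2 * j + 1), inv_pow, hqb']
  have hsign : (-1 : Fq) ^ (p + 1) = -((-1) ^ k * (-1) ^ j) := by
    rw [← pow_add, ← hkj, pow_succ]
    ring
  have hpow := qpow_eq (exp_sin k j p hkj)
  rw [hsign, pow_two, pow_two]
  rw [inv_pow, ← pow_mul, show p * (2 * j + 1) = p * (2 * j + 1) from rfl]
  field_simp at hpow ⊢
  linear_combination hpow


theorem coeff_cos_q_mul_cos_inv_q (n : ℕ) (hn : 1 ≤ n) :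
    (PowerSeries.coeff (R := Fq) (2 * n) (qcos qv * qcos qv⁻¹) =
      (-1 : Fq) ^ n * qv ^ (n * (n - 1) / 2) / qFact qv (2 * n) *
        (∏ i ∈ Finset.Icc 1 (n - 1), (1 + qv ^ i) ^ 2) * (1 + qv ^ n)) ∧
    (PowerSeries.coeff (R := Fq) (2 * n) (qcos qv * qcos qv⁻¹) =
      - PowerSeries.coeff (R := Fq) (2 * n) (qsin qv * qsin qv⁻¹)) := by
  obtain ⟨p, rfl⟩ : ∃ p, n = p + 1 := ⟨n - 1, by omega⟩
  simp only [Nat.add_sub_cancel]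
  set t := (p + 1) * p / 2 with htdef
  have ht2 : 2 * t = (p + 1) * p := by
    obtain ⟨c, hc⟩ := Nat.even_mul_succ_self p
    have hc' : (p + 1) * p = c + c := by rw [mul_comm]; exact hc
    rw [htdef, hc']
    omega
  set C : Fq := (-1 : Fq) ^ (p + 1) * qv ^ ((p + 1) * p) / qFact qv (2 * (p + 1)) with hC
  set E : Fq := ∑ k ∈ Finset.range (p + 1 + 1),
      qb (2 * (p + 1)) (2 * k) * qv ^ ((2 * k).choose 2) * ((qv ^ p)⁻¹) ^ (2 * k) with hE
  set O : Fq := ∑ k ∈ Finset.range (p + 1),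
      qb (2 * (p + 1)) (2 * k + 1) * qv ^ ((2 * k + 1).choose 2) * ((qv ^ p)⁻¹) ^ (2 * k + 1) with hO
  set R : Fq := ∏ i ∈ Finset.Icc 1 p, (1 + qv ^ i) ^ 2 with hR
  have hTpos : E + O = 2 * (qv ^ t)⁻¹ * R * (1 + qv ^ (p + 1)) := by
    rw [← prod_pos p t ht2, qb_theorem (2 * (p + 1)) ((qv ^ p)⁻¹),
      sum_split (p + 1) (fun m => qb (2 * (p + 1)) m * qv ^ m.choose 2 * ((qv ^ p)⁻¹) ^ m)]
  have hTneg : E - O = 0 := by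
    have h1 := prod_neg p
    rw [qb_theorem (2 * (p + 1)) (-(qv ^ p)⁻¹),
      sum_split (p + 1) (fun m => qb (2 * (p + 1)) m * qv ^ m.choose 2 * (-(qv ^ p)⁻¹) ^ m)] at h1
    have he : ∀ k ∈ Finset.range (p + 1 + 1),
        qb (2 * (p + 1)) (2 * k) * qv ^ ((2 * k).choose 2) * (-(qv ^ p)⁻¹) ^ (2 * k) =
        qb (2 * (p + 1)) (2 * k) * qv ^ ((2 * k).choose 2) * ((qv ^ p)⁻¹) ^ (2 * k) := by
      intro k _
      rw [(even_two_mul k).neg_pow]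
    have ho : ∀ k ∈ Finset.range (p + 1),
        qb (2 * (p + 1)) (2 * k + 1) * qv ^ ((2 * k + 1).choose 2) * (-(qv ^ p)⁻¹) ^ (2 * k + 1) =
        -(qb (2 * (p + 1)) (2 * k + 1) * qv ^ ((2 * k + 1).choose 2) * ((qv ^ p)⁻¹) ^ (2 * k + 1)) := by
      intro k _
      rw [(odd_two_mul_add_one k).neg_pow]
      ring
    rw [Finset.sum_congr rfl he, Finset.sum_congr rfl ho, Finset.sum_neg_distrib] at h1
    rw [← h1, hE, hO]
    ring
  have hEO : E = O := sub_eq_zero.mp hTneg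
  have h2 : (2 : Fq) ≠ 0 := by
    have h := RatFunc.algebraMap_ne_zero (K := ℚ) (show (2 : Polynomial ℚ) ≠ 0 by norm_num)
    rw [map_ofNat] at h
    exact h
  have hEval : E = (qv ^ t)⁻¹ * R * (1 + qv ^ (p + 1)) := by
    have h3 : 2 * E = 2 * ((qv ^ t)⁻¹ * R * (1 + qv ^ (p + 1))) := by
      rw [← hEO] at hTpos
      linear_combination hTpos
    exact mul_left_cancel₀ h2 h3
  have hcos : PowerSeries.coeff (R := Fq) (2 * (p + 1)) (qcos qv * qcos qv⁻¹) = C * E := by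
    rw [PowerSeries.coeff_mul, Finset.Nat.sum_antidiagonal_eq_sum_range_succ_mk,
      sum_split (p + 1) (fun m => PowerSeries.coeff (R := Fq) m (qcos qv) *
        PowerSeries.coeff (R := Fq) (2 * (p + 1) - m) (qcos qv⁻¹))]
    have ho : ∀ k ∈ Finset.range (p + 1),
        PowerSeries.coeff (R := Fq) (2 * k + 1) (qcos qv) *
          PowerSeries.coeff (R := Fq) (2 * (p + 1) - (2 * k + 1)) (qcos qv⁻¹) = 0 := by
      intro k _
      rw [coeff_qcos_odd]
      ring
    rw [Finset.sum_congr rfl ho, Finset.sum_const, smul_zero, add_zero]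
    have he : ∀ k ∈ Finset.range (p + 1 + 1),
        PowerSeries.coeff (R := Fq) (2 * k) (qcos qv) *
          PowerSeries.coeff (R := Fq) (2 * (p + 1) - 2 * k) (qcos qv⁻¹) =
        C * (qb (2 * (p + 1)) (2 * k) * qv ^ ((2 * k).choose 2) * ((qv ^ p)⁻¹) ^ (2 * k)) := by
      intro k hk
      rw [Finset.mem_range] at hk
      rw [show 2 * (p + 1) - 2 * k = 2 * (p + 1 - k) by omega]
      exact term_cos p k (p + 1 - k) (by omega)
    rw [Finset.sum_congr rfl he, ← Finset.mul_sum]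
  have hsin : PowerSeries.coeff (R := Fq) (2 * (p + 1)) (qsin qv * qsin qv⁻¹) = -(C * O) := by
    rw [PowerSeries.coeff_mul, Finset.Nat.sum_antidiagonal_eq_sum_range_succ_mk,
      sum_split (p + 1) (fun m => PowerSeries.coeff (R := Fq) m (qsin qv) *
        PowerSeries.coeff (R := Fq) (2 * (p + 1) - m) (qsin qv⁻¹))]
    have he : ∀ k ∈ Finset.range (p + 1 + 1),
        PowerSeries.coeff (R := Fq) (2 * k) (qsin qv) *
          PowerSeries.coeff (R := Fq) (2 * (p + 1) - 2 * k) (qsin qv⁻¹) = 0 := by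
      intro k _
      rw [coeff_qsin_even]
      ring
    rw [Finset.sum_congr rfl he, Finset.sum_const, smul_zero, zero_add]
    have ho : ∀ k ∈ Finset.range (p + 1),
        PowerSeries.coeff (R := Fq) (2 * k + 1) (qsin qv) *
          PowerSeries.coeff (R := Fq) (2 * (p + 1) - (2 * k + 1)) (qsin qv⁻¹) =
        -(C * (qb (2 * (p + 1)) (2 * (p - k) + 1) * qv ^ ((2 * (p - k) + 1).choose 2) *
          ((qv ^ p)⁻¹) ^ (2 * (p - k) + 1))) := by
      intro k hk
      rw [Finset.mem_range] at hk
      rw [show 2 * (p + 1) - (2 * k + 1) = 2 * (p - k) + 1 by omega]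
      exact term_sin p k (p - k) (by omega)
    rw [Finset.sum_congr rfl ho]
    have hrefl : ∑ k ∈ Finset.range (p + 1),
        (C * (qb (2 * (p + 1)) (2 * (p - k) + 1) * qv ^ ((2 * (p - k) + 1).choose 2) *
          ((qv ^ p)⁻¹) ^ (2 * (p - k) + 1))) = C * O := by
      rw [hO, ← Finset.mul_sum]
      congr 1
      have := Finset.sum_range_reflect (fun k => qb (2 * (p + 1)) (2 * k + 1) *
        qv ^ ((2 * k + 1).choose 2) * ((qv ^ p)⁻¹) ^ (2 * k + 1)) (p + 1)
      rw [← this]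
      apply Finset.sum_congr rfl
      intro k hk
      rw [Finset.mem_range] at hk
      rw [show p + 1 - 1 - k = p - k by omega]
    rw [Finset.sum_neg_distrib, hrefl]
  have hCE : C * E = (-1 : Fq) ^ (p + 1) * qv ^ t / qFact qv (2 * (p + 1)) * R * (1 + qv ^ (p + 1)) := by
    rw [hEval, hC]
    have hpw : qv ^ ((p + 1) * p) = qv ^ t * qv ^ t := by
      rw [← pow_add]
      congr 1
      omega
    rw [hpw]
    have hinv : qv ^ t * (qv ^ t)⁻¹ = 1 := mul_inv_cancel₀ (pow_ne_zero _ qv_ne_zero)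
    linear_combination ((-1 : Fq) ^ (p + 1) * qv ^ t * R * (1 + qv ^ (p + 1)) /
      qFact qv (2 * (p + 1))) * hinv
  constructor
  · rw [hcos, hCE]
  · rw [hcos, hsin, hEO]
    ring
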